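/- Let a ≥ 1 and r ≥ 1 be real numbers and let f: {0,1}^n → [0,1] be an a-self-bounding function. Then the function g defined by g(x) = 1 − 1/r + f(x)/r has range contained in [0,1] and is (a/r)-self-bounding. -/
import Mathlib


noncomputable section

/-- A function `f : {0,1}^n → ℝ` is `a`-self-bounding. -/
def SelfBounding (n : ℕ) (a : ℝ) (f : (Fin n → Bool) → ℝ) : Prop :=
  ∀ x : Fin n → Bool,
    (∀ i : Fin n,
      f x - min (f (Function.update x i false)) (f (Function.update x i true)) ≤ 1) ∧
    ∑ i : Fin n,
      (f x - min (f (Function.update x i false)) (f (Function.update x i true))) ≤ a * f x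

theorem selfbounding_lifting (n : ℕ) (a r : ℝ) (ha : 1 ≤ a) (hr : 1 ≤ r)
    (f : (Fin n → Bool) → ℝ) (hf01 : ∀ x, f x ∈ Set.Icc (0 : ℝ) 1)
    (hf : SelfBounding n a f) :
    (∀ x, (1 - 1 / r + f x / r) ∈ Set.Icc (0 : ℝ) 1) ∧
      SelfBounding n (a / r) (fun x => 1 - 1 / r + f x / r) := by
  have hr0 : (0 : ℝ) < r := lt_of_lt_of_le one_pos hr
  have hrinv : 1 / r ≤ 1 := by rw [div_le_one hr0]; exact hr
  have hrinv0 : 0 ≤ 1 / r := by positivity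
  constructor
  · intro x
    obtain ⟨h0, h1⟩ := hf01 x
    constructor
    · have : 0 ≤ f x / r := by positivity
      linarith
    · have : f x / r ≤ 1 / r := by gcongr
      linarith
  · intro x
    obtain ⟨hf1, hf2⟩ := hf x
    have key : ∀ i : Fin n,
        (1 - 1 / r + f x / r) -
          min (1 - 1 / r + f (Function.update x i false) / r)
              (1 - 1 / r + f (Function.update x i true) / r)
          = (f x - min (f (Function.update x i false)) (f (Function.update x i true))) / r := by
      intro i
      rcases le_total (f (Function.update x i false)) (f (Function.update x i true)) with h | h
      · rw [min_eq_left h, min_eq_left (by gcongr)]; ring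
      · rw [min_eq_right h, min_eq_right (by gcongr)]; ring
    constructor
    · intro i
      simp only []
      rw [key i]
      calc (f x - min (f (Function.update x i false)) (f (Function.update x i true))) / r
          ≤ 1 / r := by gcongr; exact hf1 i
        _ ≤ 1 := hrinv
    · simp only []
      rw [Finset.sum_congr rfl (fun i _ => key i), ← Finset.sum_div]
      have h1 : (∑ i : Fin n, (f x - min (f (Function.update x i false)) (f (Function.update x i true)))) / r ≤ (a * f x) / r := by gcongr
      have ha0 : 0 ≤ a := le_trans zero_le_one ha
      have hfx1 : f x ≤ 1 := (hf01 x).2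
      have hfx0 : 0 ≤ f x := (hf01 x).1
      have h2 : a * f x / r ≤ a / r * (1 - 1 / r + f x / r) := by
        rw [div_mul_eq_mul_div, mul_div_assoc, mul_div_assoc]
        apply mul_le_mul_of_nonneg_left _ ha0
        have hfle : f x ≤ 1 - 1 / r + f x / r := by
          have e : f x / r = f x * (1 / r) := by ring
          nlinarith [mul_le_mul_of_nonneg_right hfx1 (by linarith : (0:ℝ) ≤ 1 - 1/r)]
        gcongr
      linarith
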